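/- Fix k ≥ 2 and choices of reduced expressions for all permutations of {1,…,k}. Let w₁, w₂, w ∈ S_k and let ς₁, ς₂ ∈ {+1, −1}. Let v := 𝕋_{w₂}(e_id) if ς₂ = +1 and v := 𝕋⁻_{w₂}(e_id) if ς₂ = −1, and let A := 𝕋_{w₁} if ς₁ = +1 and A := 𝕋⁻_{w₁} if ς₁ = −1. Then κ(w₁^{ς₁}w₂^{ς₂}) + ord_w(A(v)) ≥ κ(w). Moreover, if equality holds (with ord_w(A(v)) finite), then w₁^{ς₁}w₂^{ς₂} is a κ-factor of w, i.e. there exist σ, τ ∈ S_k with w = σ·(w₁^{ς₁}w₂^{ς₂})·τ and κ(w) = κ(σ) + κ(w₁^{ς₁}w₂^{ς₂}) + κ(τ). -/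

import Mathlib

/-!
STATEMENT 13.  `S_k` is realized as `Equiv.Perm (Fin k)` (0-based points), `R = ℚ[h]` as
`Polynomial ℚ` (with `h = Polynomial.X`), and the free `R`-module `M` with basis
`{e_w : w ∈ S_k}` as `Equiv.Perm (Fin k) →₀ Polynomial ℚ` (so `e_w = Finsupp.single w 1`).
-/

noncomputable section

abbrev Rh : Type := Polynomial ℚ

abbrev Mmod (k : ℕ) : Type := Equiv.Perm (Fin k) →₀ Rh

/-- The number of inversions of a permutation of `Fin k`. -/
def invCount {k : ℕ} (w : Equiv.Perm (Fin k)) : ℕ :=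
  (Finset.univ.filter (fun p : Fin k × Fin k => p.1 < p.2 ∧ w p.2 < w p.1)).card

/-- The adjacent transposition `s_i = (i, i+1)` of `Fin k`, as a total function of `i : ℕ`
(junk value `1` out of range). -/
def sN (k i : ℕ) : Equiv.Perm (Fin k) :=
  if h : i + 1 < k then Equiv.swap ⟨i, by omega⟩ ⟨i + 1, h⟩ else 1

/-- The operator `L_i` on `M`: `L_i e_w = e_{s_iw}` if `inv(s_iw) > inv(w)` and
`L_i e_w = e_{s_iw} + h·e_w` otherwise. -/
def Lop (k i : ℕ) : Module.End Rh (Mmod k) :=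
  Finsupp.lsum Rh fun w : Equiv.Perm (Fin k) =>
    if invCount w < invCount (sN k i * w) then Finsupp.lsingle (sN k i * w)
    else Finsupp.lsingle (sN k i * w) +
      (Polynomial.X : Rh) • (Finsupp.lsingle w : Rh →ₗ[Rh] Mmod k)

/-- The operator `L_i' = L_i − h·id`. -/
def Lop' (k i : ℕ) : Module.End Rh (Mmod k) :=
  Lop k i - (Polynomial.X : Rh) • (1 : Module.End Rh (Mmod k))

/-- `𝕋_w = L_{i₁} ∘ ⋯ ∘ L_{i_ℓ}` along a list of indices `[i₁, …, i_ℓ]`. -/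
def Tpos (k : ℕ) (l : List ℕ) : Module.End Rh (Mmod k) := (l.map (Lop k)).prod

/-- `𝕋⁻_w = L'_{i_ℓ} ∘ ⋯ ∘ L'_{i₁}` along a list of indices `[i₁, …, i_ℓ]`. -/
def Tneg (k : ℕ) (l : List ℕ) : Module.End Rh (Mmod k) := (l.reverse.map (Lop' k)).prod

/-- `κ(w)`: the least number of (not necessarily adjacent) transpositions whose product
is `w`. -/
def kappa {k : ℕ} (w : Equiv.Perm (Fin k)) : ℕ :=
  sInf {n : ℕ | ∃ l : List (Equiv.Perm (Fin k)), l.length = n ∧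
    (∀ τ ∈ l, ∃ a b : Fin k, a ≠ b ∧ τ = Equiv.swap a b) ∧ l.prod = w}

/-- `ord_x(v)`: the multiplicity of the root `h = 0` of the `e_x`-coefficient of `v`
(`∞` if that coefficient is `0`). -/
def ordAt {k : ℕ} (v : Mmod k) (x : Equiv.Perm (Fin k)) : ℕ∞ :=
  if v x = 0 then ⊤ else (Polynomial.rootMultiplicity 0 (v x) : ℕ∞)

namespace Stmt13Aux

open Equiv Polynomial

variable {k : ℕ}

lemma kappa_le {w : Equiv.Perm (Fin k)} {l : List (Equiv.Perm (Fin k))}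
    (hl : ∀ τ ∈ l, ∃ a b : Fin k, a ≠ b ∧ τ = Equiv.swap a b) (hp : l.prod = w) :
    kappa w ≤ l.length :=
  Nat.sInf_le ⟨l, rfl, hl, hp⟩

lemma kappa_spec (w : Equiv.Perm (Fin k)) :
    ∃ l : List (Equiv.Perm (Fin k)), l.length = kappa w ∧
      (∀ τ ∈ l, ∃ a b : Fin k, a ≠ b ∧ τ = Equiv.swap a b) ∧ l.prod = w := by
  have hne : {n : ℕ | ∃ l : List (Equiv.Perm (Fin k)), l.length = n ∧
      (∀ τ ∈ l, ∃ a b : Fin k, a ≠ b ∧ τ = Equiv.swap a b) ∧ l.prod = w}.Nonempty := by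
    obtain ⟨l, hp, hs⟩ := w.swapFactors
    exact ⟨l.length, l, rfl, fun τ hτ => hs τ hτ, hp⟩
  exact Nat.sInf_mem hne

lemma kappa_one : kappa (1 : Equiv.Perm (Fin k)) = 0 :=
  Nat.le_zero.mp (kappa_le (l := []) (by simp) (by simp))

lemma kappa_mul_le (a b : Equiv.Perm (Fin k)) : kappa (a * b) ≤ kappa a + kappa b := by
  obtain ⟨la, hla, hsa, hpa⟩ := kappa_spec a
  obtain ⟨lb, hlb, hsb, hpb⟩ := kappa_spec b
  have := kappa_le (w := a * b) (l := la ++ lb)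
    (by intro τ hτ; rcases List.mem_append.mp hτ with h | h
        exacts [hsa τ h, hsb τ h])
    (by rw [List.prod_append, hpa, hpb])
  simpa [hla, hlb] using this

lemma kappa_conj_le (a b : Equiv.Perm (Fin k)) : kappa (a * b * a⁻¹) ≤ kappa b := by
  obtain ⟨l, hl, hs, hp⟩ := kappa_spec b
  have := kappa_le (w := a * b * a⁻¹) (l := l.map (fun τ => a * τ * a⁻¹))
    (by intro τ hτ
        obtain ⟨σ, hσ, rfl⟩ := List.mem_map.mp hτ
        obtain ⟨x, y, hxy, rfl⟩ := hs σ hσ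
        exact ⟨a x, a y, fun h => hxy (a.injective h), (Equiv.swap_apply_apply a x y).symm⟩)
    (by have : (fun τ => a * τ * a⁻¹) = ⇑((MulAut.conj a).toMonoidHom) := by
          funext τ; simp [MulAut.conj]
        rw [this, List.prod_hom l (MulAut.conj a).toMonoidHom]
        simp [hp, MulAut.conj])
  simpa [hl] using this

lemma kappa_conj (a b : Equiv.Perm (Fin k)) : kappa (a * b * a⁻¹) = kappa b := by
  refine le_antisymm (kappa_conj_le a b) ?_
  have := kappa_conj_le a⁻¹ (a * b * a⁻¹)
  simpa [mul_assoc] using this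

lemma sN_mul_self (i : ℕ) : sN k i * sN k i = 1 := by
  unfold sN
  split
  · exact Equiv.swap_mul_self _ _
  · simp

lemma sN_inv (i : ℕ) : (sN k i)⁻¹ = sN k i :=
  inv_eq_of_mul_eq_one_right (sN_mul_self i)

lemma kappa_sN_le (i : ℕ) : kappa (sN k i) ≤ 1 := by
  unfold sN
  split
  · rename_i h
    have := kappa_le (w := Equiv.swap (⟨i, by omega⟩ : Fin k) ⟨i+1, h⟩)
      (l := [Equiv.swap ⟨i, by omega⟩ ⟨i+1, h⟩])
      (by intro τ hτ
          simp only [List.mem_singleton] at hτ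
          exact ⟨⟨i, by omega⟩, ⟨i+1, h⟩, by simp [Fin.ext_iff], hτ⟩)
      (by simp)
    simpa using this
  · simp [kappa_one]

/-- The key invariant. -/
def Hp (v : Mmod k) (g : Equiv.Perm (Fin k)) : Prop :=
  ∀ x n, n < kappa (x * g⁻¹) → (v x).coeff n = 0

lemma Lop_apply (i : ℕ) (v : Mmod k) (x : Equiv.Perm (Fin k)) :
    (Lop k i v) x = v (sN k i * x) +
      if invCount x < invCount (sN k i * x) then 0 else Polynomial.X * v x := by
  induction v using Finsupp.induction_linear with
  | zero => simp
  | add f g hf hg =>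
      rw [map_add]
      simp only [Finsupp.add_apply, hf, hg]
      split <;> ring
  | single w c =>
      rw [Lop, Finsupp.lsum_single]
      have hsw : (sN k i * w = x) = (w = sN k i * x) := by
        apply propext
        constructor
        · rintro rfl; rw [← mul_assoc, sN_mul_self, one_mul]
        · rintro rfl; rw [← mul_assoc, sN_mul_self, one_mul]
      by_cases hwx : w = x
      · subst hwx
        by_cases hc : invCount w < invCount (sN k i * w)
        · rw [if_pos hc, if_pos hc]
          simp only [Finsupp.lsingle_apply, Finsupp.single_apply, hsw, add_zero]
        · rw [if_neg hc, if_neg hc]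
          simp only [LinearMap.add_apply, LinearMap.smul_apply, Finsupp.lsingle_apply,
            Finsupp.add_apply, Finsupp.smul_apply, smul_eq_mul, Finsupp.single_apply, hsw,
            if_pos rfl]
      · have hX : (if w = x then c else 0) = 0 := if_neg hwx
        by_cases hc : invCount w < invCount (sN k i * w)
        · rw [if_pos hc]
          simp only [Finsupp.lsingle_apply, Finsupp.single_apply, hsw, hX, mul_zero]
          split <;> simp
        · rw [if_neg hc]
          simp only [LinearMap.add_apply, LinearMap.smul_apply, Finsupp.lsingle_apply,
            Finsupp.add_apply, Finsupp.smul_apply, smul_eq_mul, Finsupp.single_apply, hsw, hX,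
            mul_zero, add_zero]
          split <;> simp

lemma Hp_step (i : ℕ) {v : Mmod k} {g : Equiv.Perm (Fin k)} (H : Hp v g) :
    Hp (Lop k i v) (sN k i * g) ∧ Hp (Lop' k i v) (sN k i * g) := by
  set s := sN k i with hs_def
  have hss : s * s = 1 := sN_mul_self i
  have hsinv : s⁻¹ = s := sN_inv i
  have hrw : ∀ x : Equiv.Perm (Fin k), x * (s * g)⁻¹ = x * g⁻¹ * s := by
    intro x; rw [mul_inv_rev, hsinv, mul_assoc]
  have hA : ∀ x n, n < kappa (x * (s * g)⁻¹) → (v (s * x)).coeff n = 0 := by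
    intro x n hn
    apply H
    have hconj : s * x * g⁻¹ = s * (x * g⁻¹ * s) * s⁻¹ := by
      rw [hsinv]
      calc s * x * g⁻¹ = s * x * g⁻¹ * (s * s) := by rw [hss, mul_one]
        _ = s * (x * g⁻¹ * s) * s := by group
    rw [hconj, kappa_conj, ← hrw]
    exact hn
  have hB : ∀ x n, n < kappa (x * (s * g)⁻¹) → (Polynomial.X * v x).coeff n = 0 := by
    intro x n hn
    match n with
    | 0 => simp [Polynomial.mul_coeff_zero]
    | (m+1) =>
      rw [Polynomial.coeff_X_mul]
      apply H
      have h1 : kappa (x * (s * g)⁻¹) ≤ kappa (x * g⁻¹) + 1 := by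
        rw [hrw]
        exact (kappa_mul_le _ _).trans (by have h2 : kappa s ≤ 1 := hs_def.symm ▸ kappa_sN_le (k := k) i; omega)
      omega
  have hL : Hp (Lop k i v) (s * g) := by
    intro x n hn
    rw [Lop_apply, Polynomial.coeff_add, hA x n hn, zero_add]
    split
    · simp
    · exact hB x n hn
  refine ⟨hL, ?_⟩
  intro x n hn
  have hval : (Lop' k i v) x = (Lop k i v) x - Polynomial.X * v x := by
    rw [Lop']
    simp only [LinearMap.sub_apply, LinearMap.smul_apply, Module.End.one_apply,
      Finsupp.sub_apply, Finsupp.smul_apply, smul_eq_mul]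
  rw [hval, Polynomial.coeff_sub, hL x n hn, hB x n hn, sub_zero]

lemma Hp_prod (F : ℕ → Module.End Rh (Mmod k))
    (hF : ∀ i, F i = Lop k i ∨ F i = Lop' k i) :
    ∀ (l : List ℕ) (v : Mmod k) (g : Equiv.Perm (Fin k)), Hp v g →
      Hp (((l.map F).prod) v) ((l.map (sN k)).prod * g) := by
  intro l
  induction l with
  | nil => intro v g H; simpa using H
  | cons a l ih =>
      intro v g H
      have IH := ih v g H
      have step := Hp_step a IH
      simp only [List.map_cons, List.prod_cons, Module.End.mul_apply, mul_assoc]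
      rcases hF a with h | h <;> rw [h]
      · exact step.1
      · exact step.2

lemma prod_reverse_sN (l : List ℕ) :
    ((l.reverse.map (sN k)).prod) = ((l.map (sN k)).prod)⁻¹ := by
  induction l with
  | nil => simp
  | cons a l ih =>
      simp only [List.reverse_cons, List.map_append, List.prod_append, List.map_cons,
        List.prod_cons, List.map_nil, List.prod_nil, mul_one, ih, mul_inv_rev, sN_inv]

lemma Hp_base : Hp (Finsupp.single 1 1 : Mmod k) 1 := by
  intro x n hn
  by_cases hx : x = 1
  · subst hx
    simp [kappa_one] at hn
  · rw [Finsupp.single_apply, if_neg (fun h => hx h.symm)]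
    simp

end Stmt13Aux

/-- Fix `k ≥ 2` and a choice `rw` of reduced expressions for all `w ∈ S_k`.  Let
`w₁, w₂, w ∈ S_k` and signs `ς₁, ς₂ ∈ {+1, −1}` (encoded by `Bool`: `true ↦ +1`).  Put
`v := 𝕋^{ς₂}_{w₂}(e_id)` and `A := 𝕋^{ς₁}_{w₁}`.  Then
`κ(w₁^{ς₁}w₂^{ς₂}) + ord_w(A v) ≥ κ(w)`, and if equality holds then `w₁^{ς₁}w₂^{ς₂}` is a
`κ`-factor of `w`: there are `σ, τ` with `w = σ·(w₁^{ς₁}w₂^{ς₂})·τ` and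
`κ(w) = κ(σ) + κ(w₁^{ς₁}w₂^{ς₂}) + κ(τ)`. -/
theorem statement13 (k : ℕ) (hk : 2 ≤ k)
    (rw : Equiv.Perm (Fin k) → List ℕ)
    (hrw_idx : ∀ w, ∀ j ∈ rw w, j + 1 < k)
    (hrw_eq : ∀ w, ((rw w).map (sN k)).prod = w)
    (hrw_min : ∀ w, ∀ l : List ℕ, (∀ j ∈ l, j + 1 < k) →
      (l.map (sN k)).prod = w → (rw w).length ≤ l.length)
    (w₁ w₂ w : Equiv.Perm (Fin k)) (ς₁ ς₂ : Bool)
    (wp : Equiv.Perm (Fin k))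
    (hwp : wp = (if ς₁ then w₁ else w₁⁻¹) * (if ς₂ then w₂ else w₂⁻¹))
    (v : Mmod k)
    (hv : v = (if ς₂ then Tpos k (rw w₂) else Tneg k (rw w₂)) (Finsupp.single 1 1))
    (A : Module.End Rh (Mmod k))
    (hA : A = if ς₁ then Tpos k (rw w₁) else Tneg k (rw w₁)) :
    (kappa w : ℕ∞) ≤ (kappa wp : ℕ∞) + ordAt (A v) w ∧
      ((kappa wp : ℕ∞) + ordAt (A v) w = (kappa w : ℕ∞) →
        ∃ σ τ : Equiv.Perm (Fin k), w = σ * wp * τ ∧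
          kappa w = kappa σ + kappa wp + kappa τ) := by
  classical
  have hbase := Stmt13Aux.Hp_base (k := k)
  have hv2 : Stmt13Aux.Hp v (if ς₂ then w₂ else w₂⁻¹) := by
    cases ς₂ with
    | true =>
        subst hv
        simp only [reduceIte]
        have := Stmt13Aux.Hp_prod (Lop k) (fun i => Or.inl rfl) (rw w₂) (Finsupp.single 1 1) 1
          hbase
        rw [mul_one, hrw_eq w₂] at this
        simpa [Tpos] using this
    | false =>
        subst hv
        simp only [Bool.false_eq_true, reduceIte]
        have := Stmt13Aux.Hp_prod (Lop' k) (fun i => Or.inr rfl) ((rw w₂).reverse)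
          (Finsupp.single 1 1) 1 hbase
        rw [mul_one, Stmt13Aux.prod_reverse_sN, hrw_eq w₂] at this
        simpa [Tneg] using this
  have key : Stmt13Aux.Hp (A v) wp := by
    rw [hwp]
    cases ς₁ with
    | true =>
        subst hA
        simp only [reduceIte]
        have := Stmt13Aux.Hp_prod (Lop k) (fun i => Or.inl rfl) (rw w₁) v
          (if ς₂ then w₂ else w₂⁻¹) hv2
        rw [hrw_eq w₁] at this
        simpa [Tpos] using this
    | false =>
        subst hA
        simp only [Bool.false_eq_true, reduceIte]
        have := Stmt13Aux.Hp_prod (Lop' k) (fun i => Or.inr rfl) ((rw w₁).reverse) v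
          (if ς₂ then w₂ else w₂⁻¹) hv2
        rw [Stmt13Aux.prod_reverse_sN, hrw_eq w₁] at this
        simpa [Tneg] using this
  have htri : kappa w ≤ kappa (w * wp⁻¹) + kappa wp := by
    have := Stmt13Aux.kappa_mul_le (w * wp⁻¹) wp
    simpa [mul_assoc] using this
  by_cases hz : (A v) w = 0
  · constructor
    · rw [ordAt, if_pos hz]
      simp
    · intro heq
      rw [ordAt, if_pos hz] at heq
      simp at heq
  · have hrm : kappa (w * wp⁻¹) ≤ Polynomial.rootMultiplicity 0 ((A v) w) := by
      rw [Polynomial.le_rootMultiplicity_iff hz]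
      simp only [Polynomial.C_0, sub_zero]
      rw [Polynomial.X_pow_dvd_iff]
      intro d hd
      exact key w d hd
    rw [ordAt, if_neg hz]
    constructor
    · have h : kappa w ≤ kappa wp + Polynomial.rootMultiplicity 0 ((A v) w) := by omega
      exact_mod_cast h
    · intro heq
      have heq' : kappa wp + Polynomial.rootMultiplicity 0 ((A v) w) = kappa w := by
        exact_mod_cast heq
      refine ⟨w * wp⁻¹, 1, by simp [mul_assoc], ?_⟩
      rw [Stmt13Aux.kappa_one, add_zero]
      omega


end
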